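/- Let H be a pencilled hfd line set in PG(5,K). Then a point p of PG(5,K) (a 1-dimensional subspace of V) is a vertex of H if and only if p ≤ κ for every carrier plane κ of H; equivalently, the union of the vertices of H equals the intersection of all carrier planes of H. -/
import Mathlib


/-- The Klein quadratic form on `K^6`. -/
def kleinQ {K : Type*} [Field K] (x : Fin 6 → K) : K :=
  x 0 * x 1 + x 2 * x 3 + x 4 * x 5

/-- The polar bilinear form `B(x,y) = Q(x+y) - Q(x) - Q(y)`. -/
def kleinB {K : Type*} [Field K] (x y : Fin 6 → K) : K :=
  kleinQ (x + y) - kleinQ x - kleinQ y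

/-- The polar subspace `π₅(S)` of a subspace `S`. -/
def kleinPolar {K : Type*} [Field K] (S : Submodule K (Fin 6 → K)) :
    Submodule K (Fin 6 → K) where
  carrier := {y | ∀ s ∈ S, kleinB s y = 0}
  add_mem' := by
    intro a b ha hb s hs
    have h1 := ha s hs
    have h2 := hb s hs
    simp only [kleinB, kleinQ, Pi.add_apply] at *
    linear_combination h1 + h2
  zero_mem' := by
    intro s hs
    simp [kleinB, kleinQ]
  smul_mem' := by
    intro c a ha s hs
    have h1 := ha s hs
    simp only [kleinB, kleinQ, Pi.add_apply, Pi.smul_apply, smul_eq_mul] at *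
    linear_combination c * h1

/-- `τ` is a tangent hyperplane of the Klein quadric. -/
def IsTangentHyperplane {K : Type*} [Field K] (τ : Submodule K (Fin 6 → K)) : Prop :=
  ∃ x : Fin 6 → K, x ≠ 0 ∧ kleinQ x = 0 ∧ τ = kleinPolar (Submodule.span K {x})

/-- A subspace is external to the Klein quadric. -/
def IsExternal {K : Type*} [Field K] (S : Submodule K (Fin 6 → K)) : Prop :=
  ∀ s ∈ S, s ≠ 0 → kleinQ s ≠ 0

/-- A `0`-secant of the Klein quadric: an external line. -/
def IsSecant {K : Type*} [Field K] (G : Submodule K (Fin 6 → K)) : Prop :=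
  Module.finrank K G = 2 ∧ IsExternal G

/-- The pencil of lines with vertex `v` and carrier plane `κ`. -/
def pencil {K : Type*} [Field K] (v κ : Submodule K (Fin 6 → K)) :
    Set (Submodule K (Fin 6 → K)) :=
  {X | Module.finrank K X = 2 ∧ v ≤ X ∧ X ≤ κ}

/-- An hfd line set: a set of `0`-secants such that every tangent hyperplane
contains exactly one member. -/
def IsHfd {K : Type*} [Field K] (H : Set (Submodule K (Fin 6 → K))) : Prop :=
  (∀ G ∈ H, IsSecant G) ∧
    ∀ τ : Submodule K (Fin 6 → K), IsTangentHyperplane τ → ∃! G, G ∈ H ∧ G ≤ τ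

/-- A pencilled hfd line set: every member lies in a pencil entirely contained in `H`. -/
def IsPencilledHfd {K : Type*} [Field K] (H : Set (Submodule K (Fin 6 → K))) : Prop :=
  IsHfd H ∧
    ∀ G ∈ H, ∃ v κ : Submodule K (Fin 6 → K), Module.finrank K v = 1 ∧
      Module.finrank K κ = 3 ∧ v ≤ κ ∧ pencil v κ ⊆ H ∧ G ∈ pencil v κ

/-- `v` is a vertex of the pencilled hfd line set `H`. -/
def IsVertex {K : Type*} [Field K] (H : Set (Submodule K (Fin 6 → K)))
    (v : Submodule K (Fin 6 → K)) : Prop :=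
  Module.finrank K v = 1 ∧ ∃ κ : Submodule K (Fin 6 → K),
    Module.finrank K κ = 3 ∧ v ≤ κ ∧ pencil v κ ⊆ H

/-- `κ` is a carrier plane of the pencilled hfd line set `H`. -/
def IsCarrier {K : Type*} [Field K] (H : Set (Submodule K (Fin 6 → K)))
    (κ : Submodule K (Fin 6 → K)) : Prop :=
  Module.finrank K κ = 3 ∧ ∃ v : Submodule K (Fin 6 → K),
    Module.finrank K v = 1 ∧ v ≤ κ ∧ pencil v κ ⊆ H

namespace KleinAux

variable {K : Type*} [Field K]

lemma kleinB_apply (x y : Fin 6 → K) :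
    kleinB x y = x 0 * y 1 + x 1 * y 0 + x 2 * y 3 + x 3 * y 2 + x 4 * y 5 + x 5 * y 4 := by
  simp only [kleinB, kleinQ, Pi.add_apply]; ring

lemma kleinB_comm (x y : Fin 6 → K) : kleinB x y = kleinB y x := by
  rw [kleinB_apply, kleinB_apply]; ring

lemma kleinQ_add (x y : Fin 6 → K) : kleinQ (x + y) = kleinQ x + kleinQ y + kleinB x y := by
  simp only [kleinB]; ring

lemma kleinQ_smul (c : K) (x : Fin 6 → K) : kleinQ (c • x) = c^2 * kleinQ x := by
  simp only [kleinQ, Pi.smul_apply, smul_eq_mul]; ring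

lemma kleinB_add_right (x y z : Fin 6 → K) : kleinB x (y + z) = kleinB x y + kleinB x z := by
  simp only [kleinB_apply, Pi.add_apply]; ring

lemma kleinB_smul_right (c : K) (x y : Fin 6 → K) : kleinB x (c • y) = c * kleinB x y := by
  simp only [kleinB_apply, Pi.smul_apply, smul_eq_mul]; ring

lemma kleinB_sub_right (x y z : Fin 6 → K) : kleinB x (y - z) = kleinB x y - kleinB x z := by
  simp only [kleinB_apply, Pi.sub_apply]; ring

lemma kleinB_add_left (x y z : Fin 6 → K) : kleinB (x + y) z = kleinB x z + kleinB y z := by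
  simp only [kleinB_apply, Pi.add_apply]; ring

lemma kleinB_smul_left (c : K) (x y : Fin 6 → K) : kleinB (c • x) y = c * kleinB x y := by
  simp only [kleinB_apply, Pi.smul_apply, smul_eq_mul]; ring

lemma kleinB_sub_left (x y z : Fin 6 → K) : kleinB (x - y) z = kleinB x z - kleinB y z := by
  simp only [kleinB_apply, Pi.sub_apply]; ring

lemma kleinB_zero_right (x : Fin 6 → K) : kleinB x 0 = 0 := by
  simp [kleinB_apply]

lemma kleinB_self (x : Fin 6 → K) : kleinB x x = 2 * kleinQ x := by
  simp only [kleinB_apply, kleinQ]; ring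

/-- The linear functional `y ↦ B(a,y)`. -/
def kleinBL (a : Fin 6 → K) : (Fin 6 → K) →ₗ[K] K where
  toFun y := kleinB a y
  map_add' y z := kleinB_add_right a y z
  map_smul' c y := by simpa using kleinB_smul_right c a y

@[simp] lemma kleinBL_apply (a y : Fin 6 → K) : kleinBL a y = kleinB a y := rfl

lemma nondeg {x : Fin 6 → K} (h : ∀ y : Fin 6 → K, kleinQ y = 0 → kleinB y x = 0) : x = 0 := by
  have key : ∀ j : Fin 6, kleinQ ((Pi.single j 1 : Fin 6 → K)) = 0 := by
    intro j; fin_cases j <;> simp [kleinQ, Pi.single_apply]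
  have h0 := h (Pi.single 1 1) (key 1)
  have h1 := h (Pi.single 0 1) (key 0)
  have h2 := h (Pi.single 3 1) (key 3)
  have h3 := h (Pi.single 2 1) (key 2)
  have h4 := h (Pi.single 5 1) (key 5)
  have h5 := h (Pi.single 4 1) (key 4)
  simp [kleinB_apply, Pi.single_apply] at h0 h1 h2 h3 h4 h5
  funext i; fin_cases i <;> simp [h0, h1, h2, h3, h4, h5]

end KleinAux

namespace KleinAux2
open KleinAux
variable {K : Type*} [Field K]

lemma mem_polar_iff {x y : Fin 6 → K} :
    y ∈ kleinPolar (Submodule.span K {x}) ↔ kleinB x y = 0 := by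
  constructor
  · intro h; exact h x (Submodule.mem_span_singleton_self x)
  · intro h s hs
    obtain ⟨c, rfl⟩ := Submodule.mem_span_singleton.1 hs
    rw [kleinB_smul_left, h, mul_zero]

lemma polar_eq_ker (x : Fin 6 → K) :
    kleinPolar (Submodule.span K {x}) = LinearMap.ker (kleinBL x) := by
  ext y
  rw [mem_polar_iff, LinearMap.mem_ker, kleinBL_apply]

lemma finrank_V : Module.finrank K (Fin 6 → K) = 6 := by
  simp [Module.finrank_fintype_fun_eq_card]

lemma finrank_ker_ge (f : (Fin 6 → K) →ₗ[K] K) :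
    5 ≤ Module.finrank K (LinearMap.ker f) := by
  have h := LinearMap.finrank_range_add_finrank_ker f
  rw [finrank_V] at h
  have hr : Module.finrank K (LinearMap.range f) ≤ 1 := by
    have := Submodule.finrank_le (LinearMap.range f)
    simpa using this
  omega

lemma finrank_ker_eq {f : (Fin 6 → K) →ₗ[K] K} (hf : f ≠ 0) :
    Module.finrank K (LinearMap.ker f) = 5 := by
  have h := LinearMap.finrank_range_add_finrank_ker f
  rw [finrank_V] at h
  have hr : Module.finrank K (LinearMap.range f) ≤ 1 := by
    have := Submodule.finrank_le (LinearMap.range f)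
    simpa using this
  have hne : LinearMap.range f ≠ ⊥ := fun h' => hf (LinearMap.range_eq_bot.mp h')
  have h0 : Module.finrank K (LinearMap.range f) ≠ 0 := by
    rw [Ne, Submodule.finrank_eq_zero]; exact hne
  omega

lemma finrank_inf_ge (S T : Submodule K (Fin 6 → K)) :
    Module.finrank K S + Module.finrank K T ≤ Module.finrank K ↥(S ⊓ T) + 6 := by
  have h := Submodule.finrank_sup_add_finrank_inf_eq S T
  have h2 : Module.finrank K ↥(S ⊔ T) ≤ 6 := by
    have := Submodule.finrank_le (S ⊔ T)
    rwa [finrank_V] at this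
  omega

/-- The coordinate projection onto odd coordinates. -/
def psi : (Fin 6 → K) →ₗ[K] (Fin 3 → K) where
  toFun x := ![x 1, x 3, x 5]
  map_add' x y := by funext i; fin_cases i <;> simp
  map_smul' c x := by funext i; fin_cases i <;> simp

lemma mem_ker_psi {x : Fin 6 → K} (h : x ∈ LinearMap.ker (psi (K := K))) :
    x 1 = 0 ∧ x 3 = 0 ∧ x 5 = 0 := by
  rw [LinearMap.mem_ker] at h
  refine ⟨?_, ?_, ?_⟩
  · have := congrFun h 0; simpa [psi] using this
  · have := congrFun h 1; simpa [psi] using this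
  · have := congrFun h 2; simpa [psi] using this

lemma kleinQ_of_ker_psi {x : Fin 6 → K} (h : x ∈ LinearMap.ker (psi (K := K))) :
    kleinQ x = 0 := by
  obtain ⟨h1, h3, h5⟩ := mem_ker_psi h
  simp [kleinQ, h1, h3, h5]

lemma finrank_ker_psi_ge : 3 ≤ Module.finrank K (LinearMap.ker (psi (K := K))) := by
  have h := LinearMap.finrank_range_add_finrank_ker (psi (K := K))
  rw [finrank_V] at h
  have hr : Module.finrank K (LinearMap.range (psi (K := K))) ≤ 3 := by
    have h1 := Submodule.finrank_le (LinearMap.range (psi (K := K)))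
    have h2 : Module.finrank K (Fin 3 → K) = 3 := by
      simp [Module.finrank_fintype_fun_eq_card]
    omega
  omega

lemma exists_ne_zero_of_finrank_pos {S : Submodule K (Fin 6 → K)}
    (h : 0 < Module.finrank K S) : ∃ x ∈ S, x ≠ 0 := by
  rw [← Submodule.ne_bot_iff]
  intro hbot
  rw [hbot] at h
  simp at h

lemma exists_isotropic_perp2 (a b : Fin 6 → K) :
    ∃ x : Fin 6 → K, x ≠ 0 ∧ kleinQ x = 0 ∧ kleinB a x = 0 ∧ kleinB b x = 0 := by
  set S := LinearMap.ker (kleinBL a) ⊓ LinearMap.ker (kleinBL b) with hS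
  have hSr : 4 ≤ Module.finrank K S := by
    have := finrank_inf_ge (LinearMap.ker (kleinBL a)) (LinearMap.ker (kleinBL b))
    rw [← hS] at this
    have h1 := finrank_ker_ge (kleinBL a)
    have h2 := finrank_ker_ge (kleinBL b)
    omega
  set T := LinearMap.ker (psi (K := K)) ⊓ S with hT
  have hTr : 1 ≤ Module.finrank K T := by
    have := finrank_inf_ge (LinearMap.ker (psi (K := K))) S
    rw [← hT] at this
    have h1 := finrank_ker_psi_ge (K := K)
    omega
  obtain ⟨x, hxT, hx0⟩ := exists_ne_zero_of_finrank_pos (by omega : 0 < Module.finrank K T)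
  obtain ⟨hxpsi, hxa, hxb⟩ : x ∈ LinearMap.ker (psi (K := K)) ∧
      x ∈ LinearMap.ker (kleinBL a) ∧ x ∈ LinearMap.ker (kleinBL b) := by
    exact ⟨hxT.1, hxT.2.1, hxT.2.2⟩
  exact ⟨x, hx0, kleinQ_of_ker_psi hxpsi, hxa, hxb⟩

end KleinAux2

namespace KleinAux3
open KleinAux KleinAux2
variable {K : Type*} [Field K]

lemma nondeg' {x : Fin 6 → K} (h : ∀ y : Fin 6 → K, kleinB x y = 0) : x = 0 := by
  apply nondeg
  intro y _
  rw [kleinB_comm]; exact h y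

lemma exists_smul_of_perp_ker {a b : Fin 6 → K} (ha : a ≠ 0)
    (h : ∀ y, kleinB a y = 0 → kleinB b y = 0) : ∃ c : K, b = c • a := by
  have hu : ∃ u, kleinB a u ≠ 0 := by
    by_contra h'
    push_neg at h'
    exact ha (nondeg' h')
  obtain ⟨u, hu⟩ := hu
  obtain ⟨u', hau'⟩ : ∃ u', kleinB a u' = 1 :=
    ⟨(kleinB a u)⁻¹ • u, by rw [kleinB_smul_right, inv_mul_cancel₀ hu]⟩
  refine ⟨kleinB b u', ?_⟩
  have key : ∀ y, kleinB b y = kleinB a y * kleinB b u' := by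
    intro y
    have h1 : kleinB a (y - kleinB a y • u') = 0 := by
      rw [kleinB_sub_right, kleinB_smul_right, hau', mul_one, sub_self]
    have h2 := h _ h1
    rw [kleinB_sub_right, kleinB_smul_right, sub_eq_zero] at h2
    rw [h2]
  have hz : ∀ y, kleinB (b - kleinB b u' • a) y = 0 := by
    intro y
    rw [kleinB_sub_left, kleinB_smul_left, key y]; ring
  have h0 := nondeg' hz
  rw [sub_eq_zero] at h0
  exact h0

lemma exists_isotropic_semiperp {a b : Fin 6 → K} (hQa : kleinQ a ≠ 0)
    (hb : ∀ c : K, b ≠ c • a) :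
    ∃ x : Fin 6 → K, kleinQ x = 0 ∧ kleinB a x = 0 ∧ kleinB b x ≠ 0 := by
  by_contra hcon
  push_neg at hcon
  have ha : a ≠ 0 := by
    intro h; apply hQa; rw [h]; simp [kleinQ]
  -- Find a nonzero isotropic vector w ⊥ a.
  obtain ⟨w, hw0, hQw, hwa, -⟩ := exists_isotropic_perp2 a a
  have haw : kleinB a w = 0 := hwa
  have hwa' : kleinB w a = 0 := by rw [kleinB_comm]; exact haw
  -- w is not in the radical of a^⊥:
  have hzex : ∃ z, kleinB a z = 0 ∧ kleinB w z ≠ 0 := by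
    by_contra h'
    push_neg at h'
    obtain ⟨c, hc⟩ := exists_smul_of_perp_ker ha h'
    have hq : kleinQ w = c ^ 2 * kleinQ a := by rw [hc, kleinQ_smul]
    rw [hQw] at hq
    have hc0 : c = 0 := by
      rcases mul_eq_zero.mp hq.symm with h | h
      · exact pow_eq_zero_iff (n := 2) (by norm_num) |>.mp h
      · exact absurd h hQa
    rw [hc0, zero_smul] at hc
    exact hw0 hc
  obtain ⟨z, haz, hwz⟩ := hzex
  obtain ⟨z1, hwz1, haz1⟩ : ∃ z1, kleinB w z1 = 1 ∧ kleinB a z1 = 0 :=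
    ⟨(kleinB w z)⁻¹ • z, by rw [kleinB_smul_right, inv_mul_cancel₀ hwz],
      by rw [kleinB_smul_right, haz, mul_zero]⟩
  obtain ⟨z', hwz', haz', hQz'⟩ :
      ∃ z', kleinB w z' = 1 ∧ kleinB a z' = 0 ∧ kleinQ z' = 0 := by
    refine ⟨z1 - kleinQ z1 • w, ?_, ?_, ?_⟩
    · simp only [kleinB_sub_right, kleinB_smul_right, kleinB_self, hQw, hwz1]; ring
    · simp only [kleinB_sub_right, kleinB_smul_right, haz1, haw]; ring
    · rw [sub_eq_add_neg, kleinQ_add, ← neg_smul, kleinQ_smul, kleinB_smul_right,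
        kleinB_comm z1 w, hwz1, hQw]
      ring
  have hz'w : kleinB z' w = 1 := by rw [kleinB_comm]; exact hwz'
  -- By the contradiction hypothesis, b ⊥ w and b ⊥ z'.
  have hbw : kleinB b w = 0 := hcon w hQw haw
  have hbz' : kleinB b z' = 0 := hcon z' hQz' haz'
  -- Key: b vanishes on all of a^⊥.
  have key : ∀ y, kleinB a y = 0 → kleinB b y = 0 := by
    intro y hay
    obtain ⟨cv, hwc, hzc, hac, hyeq⟩ :
        ∃ cv, kleinB w cv = 0 ∧ kleinB z' cv = 0 ∧ kleinB a cv = 0 ∧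
          y = cv + kleinB z' y • w + kleinB w y • z' := by
      refine ⟨y - kleinB z' y • w - kleinB w y • z', ?_, ?_, ?_, by abel⟩
      · simp only [kleinB_sub_right, kleinB_smul_right, kleinB_self, hQw, hwz']; ring
      · simp only [kleinB_sub_right, kleinB_smul_right, kleinB_self, hQz', hz'w]; ring
      · simp only [kleinB_sub_right, kleinB_smul_right, hay, haw, haz']; ring
    have hcw : kleinB cv w = 0 := by rw [kleinB_comm]; exact hwc
    have hcz : kleinB cv z' = 0 := by rw [kleinB_comm]; exact hzc
    obtain ⟨x, hQx, hax, hlin⟩ :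
        ∃ x, kleinQ x = 0 ∧ kleinB a x = 0 ∧
          ∀ u, kleinB u cv = kleinB u x + kleinQ cv * kleinB u w - kleinB u z' := by
      refine ⟨cv + ((-(kleinQ cv)) • w + z'), ?_, ?_, ?_⟩
      · simp only [kleinQ_add, kleinQ_smul, kleinB_add_right, kleinB_add_left,
          kleinB_smul_right, kleinB_smul_left, hQw, hQz', hwz', hcw, hcz]
        ring
      · simp only [kleinB_add_right, kleinB_smul_right, hac, haw, haz']
        ring
      · intro u
        simp only [kleinB_add_right, kleinB_smul_right]
        ring
    have hbx : kleinB b x = 0 := hcon x hQx hax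
    have hbc : kleinB b cv = 0 := by
      rw [hlin b, hbx, hbw, hbz']; ring
    rw [hyeq]
    simp only [kleinB_add_right, kleinB_smul_right, hbc, hbw, hbz']
    ring
  obtain ⟨c, hc⟩ := exists_smul_of_perp_ker ha key
  exact hb c hc

end KleinAux3

namespace KleinAux4
open KleinAux KleinAux2 KleinAux3 Submodule
variable {K : Type*} [Field K]

lemma rank_one {v : Submodule K (Fin 6 → K)} (hv : Module.finrank K v = 1) :
    ∃ a : Fin 6 → K, a ≠ 0 ∧ v = Submodule.span K {a} := by
  obtain ⟨a, hav, ha⟩ := exists_ne_zero_of_finrank_pos (by omega : 0 < Module.finrank K v)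
  refine ⟨a, ha, ?_⟩
  have h1 : Submodule.span K {a} ≤ v := by
    rw [Submodule.span_le, Set.singleton_subset_iff]; exact hav
  exact (Submodule.eq_of_le_of_finrank_le h1
    (by rw [finrank_span_singleton ha, hv])).symm

lemma exists_notMem {S T : Submodule K (Fin 6 → K)}
    (h : Module.finrank K S < Module.finrank K T) : ∃ w ∈ T, w ∉ S := by
  by_contra h'
  push_neg at h'
  have hle : T ≤ S := h'
  exact absurd (Submodule.finrank_mono hle) (by omega)

lemma finrank_pair {a c : Fin 6 → K} (ha : a ≠ 0) (hc : c ∉ Submodule.span K {a}) :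
    Module.finrank K ↥(Submodule.span K {a} ⊔ Submodule.span K {c}) = 2 := by
  have hc0 : c ≠ 0 := fun h => hc (h ▸ Submodule.zero_mem _)
  have hinf : Submodule.span K {a} ⊓ Submodule.span K {c} = ⊥ := by
    rw [Submodule.eq_bot_iff]
    rintro u ⟨hu1, hu2⟩
    obtain ⟨s, rfl⟩ := Submodule.mem_span_singleton.1 hu2
    obtain ⟨t, ht⟩ := Submodule.mem_span_singleton.1 hu1
    by_cases hs : s = 0
    · rw [hs, zero_smul]
    · exfalso
      apply hc
      rw [Submodule.mem_span_singleton]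
      exact ⟨s⁻¹ * t, by rw [mul_smul, ht, smul_smul, inv_mul_cancel₀ hs, one_smul]⟩
  have h := Submodule.finrank_sup_add_finrank_inf_eq
    (Submodule.span K {a}) (Submodule.span K {c})
  rw [hinf, finrank_span_singleton ha, finrank_span_singleton hc0] at h
  have hb : Module.finrank K (⊥ : Submodule K (Fin 6 → K)) = 0 := by simp
  omega

lemma ne_points {u v : Submodule K (Fin 6 → K)} {b : Fin 6 → K}
    (hu1 : Module.finrank K u = 1) (hv1 : Module.finrank K v = 1)
    (hvb : v = Submodule.span K {b}) (huv : u ≠ v) : b ∉ u := by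
  intro hbu
  have hb0 : b ≠ 0 := by
    intro h
    rw [hvb, h, Submodule.span_zero_singleton] at hv1
    rw [finrank_bot] at hv1
    exact one_ne_zero hv1.symm
  have h1 : v ≤ u := by
    rw [hvb, Submodule.span_le, Set.singleton_subset_iff]; exact hbu
  exact huv (Submodule.eq_of_le_of_finrank_le h1 (by omega)).symm

/-- Lemma A: the tangent hyperplane of `x` contains a pencil line whenever `x ⊥ v`. -/
lemma pencil_line_in_tangent {v κ : Submodule K (Fin 6 → K)} {x a : Fin 6 → K}
    (hva : v = Submodule.span K {a}) (ha : a ≠ 0) (hκ : Module.finrank K κ = 3)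
    (hvκ : v ≤ κ) (hax : kleinB x a = 0) :
    ∃ G, G ∈ pencil v κ ∧ G ≤ kleinPolar (Submodule.span K {x}) := by
  have hv1 : Module.finrank K v = 1 := by rw [hva, finrank_span_singleton ha]
  have hT : 2 ≤ Module.finrank K ↥(κ ⊓ LinearMap.ker (kleinBL x)) := by
    have h1 := finrank_inf_ge κ (LinearMap.ker (kleinBL x))
    have h2 := finrank_ker_ge (kleinBL x)
    omega
  have haK : a ∈ LinearMap.ker (kleinBL x) := hax
  have hvT : v ≤ κ ⊓ LinearMap.ker (kleinBL x) := by
    refine le_inf hvκ ?_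
    rw [hva, Submodule.span_le, Set.singleton_subset_iff]
    exact haK
  obtain ⟨c, hcT, hcv⟩ :=
    exists_notMem (S := v) (T := κ ⊓ LinearMap.ker (kleinBL x)) (by omega)
  have hcva : c ∉ Submodule.span K {a} := by rw [← hva]; exact hcv
  refine ⟨Submodule.span K {a} ⊔ Submodule.span K {c}, ⟨finrank_pair ha hcva, ?_, ?_⟩, ?_⟩
  · rw [hva]; exact le_sup_left
  · exact sup_le (hva ▸ hvκ) (by
      rw [Submodule.span_le, Set.singleton_subset_iff]; exact hcT.1)
  · rw [polar_eq_ker]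
    refine sup_le ?_ ?_
    · rw [Submodule.span_le, Set.singleton_subset_iff]
      exact haK
    · rw [Submodule.span_le, Set.singleton_subset_iff]
      exact hcT.2

/-- Lemma B: a carrier plane of a pencil contained in `H` is never inside a tangent hyperplane. -/
lemma carrier_not_le_tangent {H : Set (Submodule K (Fin 6 → K))} (hH : IsHfd H)
    {v κ τ : Submodule K (Fin 6 → K)} (hτ : IsTangentHyperplane τ)
    (hv1 : Module.finrank K v = 1) (hκ3 : Module.finrank K κ = 3) (hvκ : v ≤ κ)
    (hpen : pencil v κ ⊆ H) : ¬ κ ≤ τ := by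
  intro hle
  obtain ⟨a, ha, hva⟩ := rank_one hv1
  obtain ⟨c, hcκ, hcv⟩ := exists_notMem (S := v) (T := κ) (by omega)
  have hcva : c ∉ Submodule.span K {a} := by rw [← hva]; exact hcv
  set S : Submodule K (Fin 6 → K) := Submodule.span K {a} ⊔ Submodule.span K {c} with hSdef
  have hS2 : Module.finrank K S = 2 := finrank_pair ha hcva
  have hSκ : S ≤ κ := sup_le (hva ▸ hvκ) (by
    rw [Submodule.span_le, Set.singleton_subset_iff]; exact hcκ)
  obtain ⟨d, hdκ, hdS⟩ := exists_notMem (S := S) (T := κ) (by omega)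
  have hdva : d ∉ Submodule.span K {a} := fun h => hdS (le_sup_left (α := Submodule K (Fin 6 → K)) h)
  set G2 : Submodule K (Fin 6 → K) := Submodule.span K {a} ⊔ Submodule.span K {d} with hG2def
  have hG22 : Module.finrank K G2 = 2 := finrank_pair ha hdva
  have hG2κ : G2 ≤ κ := sup_le (hva ▸ hvκ) (by
    rw [Submodule.span_le, Set.singleton_subset_iff]; exact hdκ)
  have hSpen : S ∈ pencil v κ := ⟨hS2, hva ▸ le_sup_left, hSκ⟩
  have hG2pen : G2 ∈ pencil v κ := ⟨hG22, hva ▸ le_sup_left, hG2κ⟩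
  obtain ⟨G, -, hGuniq⟩ := hH.2 τ hτ
  have e1 : S = G := hGuniq S ⟨hpen hSpen, le_trans hSκ hle⟩
  have e2 : G2 = G := hGuniq G2 ⟨hpen hG2pen, le_trans hG2κ hle⟩
  apply hdS
  rw [e1, ← e2]
  exact le_sup_right (α := Submodule K (Fin 6 → K)) (Submodule.mem_span_singleton_self d)

end KleinAux4

namespace KleinAux5
open KleinAux KleinAux2 KleinAux3 KleinAux4 Submodule
variable {K : Type*} [Field K]

/-- Lemma C': structure of the unique `H`-line in a tangent hyperplane. -/
lemma unique_line_structure {H : Set (Submodule K (Fin 6 → K))} (hH : IsPencilledHfd H)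
    {x : Fin 6 → K} (hx : x ≠ 0) (hQx : kleinQ x = 0) :
    ∃ G κ₃ v₃ : Submodule K (Fin 6 → K), G ∈ H ∧ Module.finrank K G = 2 ∧
      IsCarrier H κ₃ ∧ IsVertex H v₃ ∧ v₃ ≤ G ∧
      G = κ₃ ⊓ kleinPolar (Submodule.span K {x}) ∧
      ∀ G' ∈ H, G' ≤ kleinPolar (Submodule.span K {x}) → G' = G := by
  have hτ : IsTangentHyperplane (kleinPolar (Submodule.span K {x})) := ⟨x, hx, hQx, rfl⟩
  obtain ⟨G, ⟨hGH, hGτ⟩, huniq⟩ := hH.1.2 _ hτ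
  obtain ⟨v₃, κ₃, hv1, hκ3, hvκ, hpen, hGpen⟩ := hH.2 G hGH
  have hfx : kleinBL x ≠ 0 := by
    intro h
    apply hx
    apply nondeg'
    intro y
    have := DFunLike.congr_fun h y
    simpa using this
  have hτ5 : Module.finrank K (kleinPolar (Submodule.span K {x})) = 5 := by
    rw [polar_eq_ker]; exact finrank_ker_eq hfx
  have hinfge : 2 ≤ Module.finrank K ↥(κ₃ ⊓ kleinPolar (Submodule.span K {x})) := by
    have := finrank_inf_ge κ₃ (kleinPolar (Submodule.span K {x}))
    omega
  have hnotle : ¬ κ₃ ≤ kleinPolar (Submodule.span K {x}) :=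
    carrier_not_le_tangent hH.1 hτ hv1 hκ3 hvκ hpen
  have hinfle : Module.finrank K ↥(κ₃ ⊓ kleinPolar (Submodule.span K {x})) ≤ 2 := by
    by_contra h
    push_neg at h
    have heq : κ₃ ⊓ kleinPolar (Submodule.span K {x}) = κ₃ :=
      Submodule.eq_of_le_of_finrank_le inf_le_left (by omega)
    apply hnotle
    rw [← heq]
    exact inf_le_right
  have hG2 : Module.finrank K G = 2 := hGpen.1
  have hGle : G ≤ κ₃ ⊓ kleinPolar (Submodule.span K {x}) := le_inf hGpen.2.2 hGτ
  have hGeq : G = κ₃ ⊓ kleinPolar (Submodule.span K {x}) :=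
    Submodule.eq_of_le_of_finrank_le hGle (by omega)
  exact ⟨G, κ₃, v₃, hGH, hGpen.1, ⟨hκ3, v₃, hv1, hvκ, hpen⟩, ⟨hv1, κ₃, hκ3, hvκ, hpen⟩,
    hGpen.2.1, hGeq, fun G' hG'H hG'τ => huniq G' ⟨hG'H, hG'τ⟩⟩

/-- Every vertex lies in every carrier plane. -/
lemma vertex_le_carrier {H : Set (Submodule K (Fin 6 → K))} (hH : IsPencilledHfd H)
    {v κ : Submodule K (Fin 6 → K)} (hv : IsVertex H v) (hκ : IsCarrier H κ) : v ≤ κ := by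
  obtain ⟨hv1, κ₀, hκ₀3, hvκ₀, hpen₀⟩ := hv
  obtain ⟨hκ3, u, hu1, huκ, hpenu⟩ := hκ
  obtain ⟨a, ha, hva⟩ := rank_one hv1
  obtain ⟨b, hb, hub⟩ := rank_one hu1
  obtain ⟨x, hx0, hQx, hax, hbx⟩ := exists_isotropic_perp2 a b
  have hxa : kleinB x a = 0 := by rw [kleinB_comm]; exact hax
  have hxb : kleinB x b = 0 := by rw [kleinB_comm]; exact hbx
  obtain ⟨G₁, hG₁pen, hG₁τ⟩ := pencil_line_in_tangent hva ha hκ₀3 hvκ₀ hxa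
  obtain ⟨G₂, hG₂pen, hG₂τ⟩ := pencil_line_in_tangent hub hb hκ3 huκ hxb
  have hτ : IsTangentHyperplane (kleinPolar (Submodule.span K {x})) := ⟨x, hx0, hQx, rfl⟩
  obtain ⟨G, -, huniq⟩ := hH.1.2 _ hτ
  have e1 := huniq G₁ ⟨hpen₀ hG₁pen, hG₁τ⟩
  have e2 := huniq G₂ ⟨hpenu hG₂pen, hG₂τ⟩
  have hvG : v ≤ G₁ := hG₁pen.2.1
  rw [e1, ← e2] at hvG
  exact le_trans hvG hG₂pen.2.2

lemma exists_vertex {H : Set (Submodule K (Fin 6 → K))} (hH : IsPencilledHfd H) :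
    ∃ v, IsVertex H v := by
  have hx0 : (Pi.single 0 1 : Fin 6 → K) ≠ 0 := by
    intro h
    have := congrFun h 0
    simp at this
  have hQ : kleinQ (Pi.single 0 1 : Fin 6 → K) = 0 := by
    simp [kleinQ, Pi.single_apply]
  have hτ : IsTangentHyperplane (kleinPolar (Submodule.span K {(Pi.single 0 1 : Fin 6 → K)})) :=
    ⟨_, hx0, hQ, rfl⟩
  obtain ⟨G, ⟨hGH, -⟩, -⟩ := hH.1.2 _ hτ
  obtain ⟨v, κ, hv1, hκ3, hvκ, hpen, -⟩ := hH.2 G hGH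
  exact ⟨v, hv1, κ, hκ3, hvκ, hpen⟩

lemma exists_two_vertices {H : Set (Submodule K (Fin 6 → K))} (hH : IsPencilledHfd H) :
    ∃ v₁ v₂, IsVertex H v₁ ∧ IsVertex H v₂ ∧ v₁ ≠ v₂ := by
  obtain ⟨v₁, hv₁⟩ := exists_vertex hH
  by_contra hcon
  push_neg at hcon
  obtain ⟨b₁, hb₁, hv₁b⟩ := rank_one hv₁.1
  have hall : ∀ x : Fin 6 → K, kleinQ x = 0 → kleinB x b₁ = 0 := by
    intro x hQx
    by_cases hx0 : x = 0
    · rw [hx0, kleinB_comm]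
      exact kleinB_zero_right b₁
    · have hτ : IsTangentHyperplane (kleinPolar (Submodule.span K {x})) := ⟨x, hx0, hQx, rfl⟩
      obtain ⟨G, ⟨hGH, hGτ⟩, -⟩ := hH.1.2 _ hτ
      obtain ⟨v, κ, hv1, hκ3, hvκ, hpen, hGpen⟩ := hH.2 G hGH
      have hveq : v = v₁ := hcon v v₁ ⟨hv1, κ, hκ3, hvκ, hpen⟩ hv₁
      have hb₁v : b₁ ∈ v := by
        rw [hveq, hv₁b]
        exact Submodule.mem_span_singleton_self b₁
      have : b₁ ∈ kleinPolar (Submodule.span K {x}) := hGτ (hGpen.2.1 hb₁v)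
      exact mem_polar_iff.1 this
  exact hb₁ (nondeg hall)

end KleinAux5

/-- Main Theorem, part (e).
A point `p` is a vertex of the pencilled hfd line set `H` if and only if `p` lies
in every carrier plane of `H`. -/
theorem vertices_eq_intersection_of_carriers {K : Type*} [Field K]
    (H : Set (Submodule K (Fin 6 → K))) (hH : IsPencilledHfd H)
    (p : Submodule K (Fin 6 → K)) (hp : Module.finrank K p = 1) :
    IsVertex H p ↔ ∀ κ : Submodule K (Fin 6 → K), IsCarrier H κ → p ≤ κ := by
  constructor
  · intro hv κ hκ
    exact KleinAux5.vertex_le_carrier hH hv hκ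
  · intro hall
    obtain ⟨a, ha, hpa⟩ := KleinAux4.rank_one hp
    have hap : a ∈ p := by rw [hpa]; exact Submodule.mem_span_singleton_self a
    by_cases hcar : ∀ κ κ' : Submodule K (Fin 6 → K), IsCarrier H κ → IsCarrier H κ' → κ = κ'
    · -- Case (ii): all carrier planes coincide.
      obtain ⟨v₁, hv₁⟩ := KleinAux5.exists_vertex hH
      obtain ⟨hv₁1, κ₁, hκ₁3, hv₁κ₁, hpen₁⟩ := hv₁
      have hκ₁car : IsCarrier H κ₁ := ⟨hκ₁3, v₁, hv₁1, hv₁κ₁, hpen₁⟩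
      refine ⟨hp, κ₁, hκ₁3, hall κ₁ hκ₁car, ?_⟩
      rintro Y ⟨hY2, hpY, hYκ⟩
      obtain ⟨c, hcY, hcp⟩ := KleinAux4.exists_notMem (S := p) (T := Y) (by omega)
      have hcpa : c ∉ Submodule.span K {a} := by rw [← hpa]; exact hcp
      have hYeq : Y = Submodule.span K {a} ⊔ Submodule.span K {c} := by
        refine (Submodule.eq_of_le_of_finrank_le ?_ ?_).symm
        · exact sup_le (by rw [← hpa]; exact hpY)
            (by rw [Submodule.span_le, Set.singleton_subset_iff]; exact hcY)
        · rw [hY2, KleinAux4.finrank_pair ha hcpa]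
      obtain ⟨x, hx0, hQx, hax, hcx⟩ := KleinAux2.exists_isotropic_perp2 a c
      obtain ⟨G, κ₃, v₃, hGH, hG2, hκ₃car, hv₃ver, hv₃G, hGeq, huniq⟩ :=
        KleinAux5.unique_line_structure hH hx0 hQx
      have hκeq : κ₃ = κ₁ := hcar κ₃ κ₁ hκ₃car hκ₁car
      have hYτ : Y ≤ kleinPolar (Submodule.span K {x}) := by
        rw [hYeq]
        refine sup_le ?_ ?_
        · rw [Submodule.span_le, Set.singleton_subset_iff]
          exact KleinAux2.mem_polar_iff.2 (by rw [KleinAux.kleinB_comm]; exact hax)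
        · rw [Submodule.span_le, Set.singleton_subset_iff]
          exact KleinAux2.mem_polar_iff.2 (by rw [KleinAux.kleinB_comm]; exact hcx)
      have hYG : Y ≤ G := by
        rw [hGeq]
        exact le_inf (by rw [hκeq]; exact hYκ) hYτ
      have hYGeq : Y = G := Submodule.eq_of_le_of_finrank_le hYG (by omega)
      rw [hYGeq]
      exact hGH
    · -- Case (i): there exist two distinct carrier planes.
      push_neg at hcar
      obtain ⟨κa, κb, hκa, hκb, hκab⟩ := hcar
      obtain ⟨u₁, u₂, hu₁, hu₂, hu12⟩ := KleinAux5.exists_two_vertices hH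
      by_cases hpu : p = u₁
      · rw [hpu]; exact hu₁
      obtain ⟨b₁, hb₁0, hu₁b⟩ := KleinAux4.rank_one hu₁.1
      obtain ⟨b₂, hb₂0, hu₂b⟩ := KleinAux4.rank_one hu₂.1
      have hu₁L : u₁ ≤ κa ⊓ κb :=
        le_inf (KleinAux5.vertex_le_carrier hH hu₁ hκa) (KleinAux5.vertex_le_carrier hH hu₁ hκb)
      have hu₂L : u₂ ≤ κa ⊓ κb :=
        le_inf (KleinAux5.vertex_le_carrier hH hu₂ hκa) (KleinAux5.vertex_le_carrier hH hu₂ hκb)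
      have hb₂u₁ : b₂ ∉ u₁ := KleinAux4.ne_points hu₁.1 hu₂.1 hu₂b hu12
      have hb₂b₁ : b₂ ∉ Submodule.span K {b₁} := by rw [← hu₁b]; exact hb₂u₁
      have hM2 : Module.finrank K ↥(u₁ ⊔ u₂) = 2 := by
        rw [hu₁b, hu₂b]
        exact KleinAux4.finrank_pair hb₁0 hb₂b₁
      have hML : u₁ ⊔ u₂ ≤ κa ⊓ κb := sup_le hu₁L hu₂L
      have hκa3 : Module.finrank K κa = 3 := hκa.1
      have hκb3 : Module.finrank K κb = 3 := hκb.1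
      have hLle : Module.finrank K ↥(κa ⊓ κb) ≤ 2 := by
        by_contra h
        push_neg at h
        have h1 : κa ⊓ κb = κa :=
          Submodule.eq_of_le_of_finrank_le inf_le_left (by omega)
        have h2 : κa ≤ κb := by rw [← h1]; exact inf_le_right
        exact hκab (Submodule.eq_of_le_of_finrank_le h2 (by omega))
      have hLeq : u₁ ⊔ u₂ = κa ⊓ κb :=
        Submodule.eq_of_le_of_finrank_le hML (by omega)
      have hpL : p ≤ u₁ ⊔ u₂ := by
        rw [hLeq]
        exact le_inf (hall κa hκa) (hall κb hκb)
      have hb₁p : b₁ ∉ p := KleinAux4.ne_points hp hu₁.1 hu₁b hpu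
      have hb₁pa : b₁ ∉ Submodule.span K {a} := by rw [← hpa]; exact hb₁p
      have hL2' : Submodule.span K {a} ⊔ Submodule.span K {b₁} ≤ u₁ ⊔ u₂ :=
        sup_le (by rw [← hpa]; exact hpL)
          (by rw [← hu₁b]; exact le_sup_left)
      have hLeq2 : Submodule.span K {a} ⊔ Submodule.span K {b₁} = u₁ ⊔ u₂ :=
        Submodule.eq_of_le_of_finrank_le hL2'
          (by rw [hM2, KleinAux4.finrank_pair ha hb₁pa])
      -- the line `u₁ ⊔ u₂` belongs to `H`, hence is external; so `Q a ≠ 0`.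
      obtain ⟨hu₁1, κ', hκ'3, hu₁κ', hpen'⟩ := hu₁
      have hκ'car : IsCarrier H κ' := ⟨hκ'3, u₁, hu₁1, hu₁κ', hpen'⟩
      have hu₂κ' : u₂ ≤ κ' := KleinAux5.vertex_le_carrier hH hu₂ hκ'car
      have hLκ' : u₁ ⊔ u₂ ≤ κ' := sup_le hu₁κ' hu₂κ'
      have hLH : (u₁ ⊔ u₂) ∈ H := hpen' ⟨hM2, le_sup_left, hLκ'⟩
      have haL : a ∈ u₁ ⊔ u₂ := hpL hap
      have hQa : kleinQ a ≠ 0 := (hH.1.1 _ hLH).2 a haL ha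
      have hb₁mult : ∀ c : K, b₁ ≠ c • a := by
        intro c hc
        apply hb₁pa
        rw [Submodule.mem_span_singleton]
        exact ⟨c, hc.symm⟩
      obtain ⟨x, hQx, haxx, hbx⟩ := KleinAux3.exists_isotropic_semiperp hQa hb₁mult
      have hx0 : x ≠ 0 := by
        intro h
        rw [h] at hbx
        exact hbx (KleinAux.kleinB_zero_right b₁)
      obtain ⟨G, κ₃, v₃, hGH, hG2, hκ₃car, hv₃ver, hv₃G, hGeq, -⟩ :=
        KleinAux5.unique_line_structure hH hx0 hQx
      have hv₃L : v₃ ≤ u₁ ⊔ u₂ := by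
        rw [hLeq]
        exact le_inf (KleinAux5.vertex_le_carrier hH hv₃ver hκa)
          (KleinAux5.vertex_le_carrier hH hv₃ver hκb)
      obtain ⟨b₃, hb₃0, hv₃b⟩ := KleinAux4.rank_one hv₃ver.1
      have hb₃v : b₃ ∈ v₃ := by rw [hv₃b]; exact Submodule.mem_span_singleton_self b₃
      have hb₃L : b₃ ∈ Submodule.span K {a} ⊔ Submodule.span K {b₁} := by
        rw [hLeq2]
        exact hv₃L hb₃v
      obtain ⟨y, hy, z, hz, hyz⟩ := Submodule.mem_sup.1 hb₃L
      obtain ⟨α, rfl⟩ := Submodule.mem_span_singleton.1 hy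
      obtain ⟨β, rfl⟩ := Submodule.mem_span_singleton.1 hz
      have hb₃τ : kleinB x b₃ = 0 := by
        apply KleinAux2.mem_polar_iff.1
        have hb₃G : b₃ ∈ G := hv₃G hb₃v
        rw [hGeq] at hb₃G
        exact hb₃G.2
      have hxb₁ : kleinB x b₁ ≠ 0 := by rw [KleinAux.kleinB_comm]; exact hbx
      have hxa0 : kleinB x a = 0 := by rw [KleinAux.kleinB_comm]; exact haxx
      have hβ : β = 0 := by
        rw [← hyz, KleinAux.kleinB_add_right, KleinAux.kleinB_smul_right,
          KleinAux.kleinB_smul_right, hxa0, mul_zero, zero_add] at hb₃τ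
        rcases mul_eq_zero.1 hb₃τ with h | h
        · exact h
        · exact absurd h hxb₁
      have hb₃a : b₃ = α • a := by rw [← hyz, hβ, zero_smul, add_zero]
      have hα : α ≠ 0 := by
        intro h
        rw [h, zero_smul] at hb₃a
        exact hb₃0 hb₃a
      have hveq : v₃ = p := by
        rw [hv₃b, hb₃a, Submodule.span_singleton_smul_eq (isUnit_iff_ne_zero.2 hα), ← hpa]
      rw [← hveq]
      exact hv₃ver
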